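/- For a graph G of order n ≥ 2, SEC(G) = 2 if and only if G ≅ K₂ or G is the edgeless graph on n vertices. -/

import Mathlib

namespace SecCoal

/-- `D` is a dominating set of `G`. -/
def IsDominating {V : Type*} (G : SimpleGraph V) (D : Set V) : Prop :=
  ∀ v ∉ D, ∃ u ∈ D, G.Adj u v

/-- `S` is a secure dominating set of `G`. -/
def IsSecureDominating {V : Type*} (G : SimpleGraph V) (S : Set V) : Prop :=
  IsDominating G S ∧
    ∀ u ∉ S, ∃ v ∈ S, G.Adj v u ∧ IsDominating G ((S \ {v}) ∪ {u})

/-- Degree of a vertex. -/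
noncomputable def deg {V : Type*} (G : SimpleGraph V) (v : V) : ℕ :=
  (G.neighborSet v).ncard

/-- Minimum degree. -/
noncomputable def minDeg {V : Type*} (G : SimpleGraph V) : ℕ :=
  sInf (Set.range (deg G))

/-- Maximum degree. -/
noncomputable def maxDeg {V : Type*} (G : SimpleGraph V) : ℕ :=
  sSup (Set.range (deg G))

/-- `π` is a secure coalition partition of `G`. -/
def IsSecPartition {V : Type*} (G : SimpleGraph V) (π : Finset (Set V)) : Prop :=
  Setoid.IsPartition (↑π : Set (Set V)) ∧
    ∀ A ∈ π,
      (∃ v, A = {v} ∧ deg G v = Nat.card V - 1 ∧ IsSecureDominating G A) ∨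
      (¬ IsSecureDominating G A ∧
        ∃ B ∈ π, B ≠ A ∧ IsSecureDominating G (A ∪ B))

/-- The secure coalition number of `G`. -/
noncomputable def SEC {V : Type*} (G : SimpleGraph V) : ℕ :=
  sSup {k | ∃ π : Finset (Set V), IsSecPartition G π ∧ π.card = k}

/-- Two disjoint sets form a secure coalition. -/
def FormsSecCoalition {V : Type*} (G : SimpleGraph V) (A B : Set V) : Prop :=
  Disjoint A B ∧ ¬ IsSecureDominating G A ∧ ¬ IsSecureDominating G B ∧
    IsSecureDominating G (A ∪ B)

/-- The domination number of `G`. -/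
noncomputable def gammaDom {V : Type*} (G : SimpleGraph V) : ℕ :=
  sInf {k | ∃ D : Set V, IsDominating G D ∧ D.ncard = k}

/-- The secure domination number of `G`. -/
noncomputable def secDomNum {V : Type*} (G : SimpleGraph V) : ℕ :=
  sInf {k | ∃ S : Set V, IsSecureDominating G S ∧ S.ncard = k}

/-- `π` is a coalition partition (w.r.t. domination) of `G`. -/
def IsCoalitionPartition {V : Type*} (G : SimpleGraph V) (π : Finset (Set V)) : Prop :=
  Setoid.IsPartition (↑π : Set (Set V)) ∧
    ∀ A ∈ π,
      (∃ v, A = {v} ∧ IsDominating G A) ∨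
      (¬ IsDominating G A ∧ ∃ B ∈ π, B ≠ A ∧ IsDominating G (A ∪ B))

/-- The coalition number of `G`. -/
noncomputable def CNum {V : Type*} (G : SimpleGraph V) : ℕ :=
  sSup {k | ∃ π : Finset (Set V), IsCoalitionPartition G π ∧ π.card = k}

/-- The secure coalition graph of `G` w.r.t. a partition `π`. -/
def SCG {V : Type*} (G : SimpleGraph V) (π : Finset (Set V)) :
    SimpleGraph {A : Set V // A ∈ π} where
  Adj A B := FormsSecCoalition G A.1 B.1
  symm := by
    constructor
    rintro A B ⟨hd, h1, h2, h3⟩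
    exact ⟨hd.symm, h2, h1, by rwa [Set.union_comm]⟩
  loopless := by
    constructor
    rintro A ⟨hd, h1, h2, h3⟩
    exact h1 (by simpa using h3)

end SecCoal

open SecCoal

section H
variable {V : Type*} [Fintype V] {G : SimpleGraph V}

omit [Fintype V] in
lemma univ_secure (G : SimpleGraph V) : IsSecureDominating G Set.univ := by
  constructor
  · intro v hv; exact absurd (Set.mem_univ v) hv
  · intro u hu; exact absurd (Set.mem_univ u) hu

omit [Fintype V] in
lemma compl_singleton_secure {x y : V} (h : G.Adj x y) :
    IsSecureDominating G ({x}ᶜ : Set V) := by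
  have hxy : y ≠ x := G.ne_of_adj h.symm
  constructor
  · intro v hv
    have hv' : v = x := by simpa using hv
    exact ⟨y, by simpa using hxy, by rw [hv']; exact h.symm⟩
  · intro u hu
    have hux : u = x := by simpa using hu
    refine ⟨y, by simpa using hxy, by rw [hux]; exact h.symm, ?_⟩
    intro v hv
    have hvy : v = y := by
      by_contra hne
      apply hv
      rcases eq_or_ne v x with rfl | hvx
      · right; simp [hux]
      · left; simp [hvx, hne]
    refine ⟨x, ?_, ?_⟩
    · right; simp [hux]
    · rw [hvy]; exact h

omit [Fintype V] in
lemma top_of_singleton_secure {w : V} (h : IsSecureDominating G {w}) : G = ⊤ := by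
  have key : ∀ a b : V, a ≠ b → G.Adj a b := by
    intro a b hab
    rcases eq_or_ne a w with rfl | haw
    · rcases h.1 b (by simpa using hab.symm) with ⟨u, hu, hadj⟩
      have : u = a := hu
      rwa [this] at hadj
    · rcases h.2 a (by simpa using haw) with ⟨v, hv, hadj, hdom⟩
      have hvw : v = w := hv
      subst hvw
      have : ({v} \ {v} : Set V) ∪ {a} = {a} := by simp
      rw [this] at hdom
      rcases hdom b (by simpa using hab.symm) with ⟨u, hu, hadj'⟩
      have : u = a := hu
      rwa [this] at hadj'
  ext a b
  simp only [SimpleGraph.top_adj]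
  exact ⟨fun hadj => G.ne_of_adj hadj, fun hne => key a b hne⟩

omit [Fintype V] in
lemma not_secure_singleton (hG : G ≠ ⊤) (w : V) : ¬ IsSecureDominating G {w} :=
  fun h => hG (top_of_singleton_secure h)

lemma partition_card_le {π : Finset (Set V)}
    (hp : Setoid.IsPartition (↑π : Set (Set V))) : π.card ≤ Fintype.card V := by
  classical
  rcases isEmpty_or_nonempty V with hV | hV
  · have : π = ∅ := by
      rw [Finset.eq_empty_iff_forall_notMem]
      intro A hA
      have : A = ∅ := Set.eq_empty_of_isEmpty A
      exact hp.1 (by rw [← this]; exact_mod_cast hA)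
    simp [this]
  have hne : ∀ A ∈ π, (A : Set V).Nonempty := by
    intro A hA
    rw [Set.nonempty_iff_ne_empty]
    rintro rfl
    exact hp.1 (by exact_mod_cast hA)
  have : π.card ≤ (Finset.univ : Finset V).card := by
    apply Finset.card_le_card_of_injOn
      (fun A => if h : (A : Set V).Nonempty then h.some else Classical.arbitrary V)
    · intro A hA; exact Finset.mem_univ _
    · intro A hA B hB hfAB
      have hAne := hne A hA
      have hBne := hne B hB
      simp only [dif_pos hAne, dif_pos hBne] at hfAB
      have haA : hAne.some ∈ A := hAne.some_mem
      have haB : hAne.some ∈ B := by rw [hfAB]; exact hBne.some_mem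
      rcases hp.2 hAne.some with ⟨C, _, hCuniq⟩
      have h1 : A = C := hCuniq A ⟨by exact_mod_cast hA, haA⟩
      have h2 : B = C := hCuniq B ⟨by exact_mod_cast hB, haB⟩
      rw [h1, h2]
  simpa using this

/-- The key construction: a graph with an edge, not complete, on ≥ 3 vertices
has a secure coalition partition with at least 3 parts. -/
lemma exists_big_partition (h3 : 3 ≤ Fintype.card V) (hG : G ≠ ⊤)
    {a b : V} (hab : G.Adj a b) :
    ∃ π : Finset (Set V), IsSecPartition G π ∧ 3 ≤ π.card := by
  classical
  set I : Set V := {v | ∀ u, ¬ G.Adj v u} with hI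
  set F : Set (Set V) := {A | ¬ IsSecureDominating G A ∧ I ⊆ A} with hF
  have hInsec : ¬ IsSecureDominating G I := by
    rintro ⟨hdom, -⟩
    have haI : a ∉ I := fun h => h b hab
    rcases hdom a haI with ⟨u, hu, hadj⟩
    exact hu a hadj
  have hIF : I ∈ F := ⟨hInsec, le_refl I⟩
  obtain ⟨U, hUF, hUmax⟩ : ∃ U ∈ F, ∀ A ∈ F, U.ncard ≤ A.ncard → U.ncard = A.ncard := by
    obtain ⟨U, hU, h⟩ := Set.exists_max_image F Set.ncard (Set.toFinite F) ⟨I, hIF⟩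
    exact ⟨U, hU, fun A hA hle => le_antisymm hle (h A hA)⟩
  have hUsec : ∀ x ∉ U, IsSecureDominating G (U ∪ {x}) := by
    intro x hx
    by_contra hsec
    have hmem : (insert x U) ∈ F :=
      ⟨by rwa [Set.union_singleton] at hsec, hUF.2.trans (Set.subset_insert x U)⟩
    have hcard : (insert x U).ncard = U.ncard + 1 :=
      Set.ncard_insert_of_notMem hx (Set.toFinite U)
    have := hUmax _ hmem (by omega)
    omega
  have hUne : U.Nonempty := by
    rcases Set.eq_empty_or_nonempty I with hIe | hIne
    · by_contra h
      rw [Set.not_nonempty_iff_eq_empty] at h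
      have haF : ({a} : Set V) ∈ F := ⟨not_secure_singleton hG a, by simp [hIe]⟩
      have h1 : U.ncard ≤ ({a} : Set V).ncard := by
        simp [h, Set.ncard_singleton]
      have := hUmax _ haF h1
      rw [h] at this
      simp [Set.ncard_singleton] at this
    · exact hIne.mono hUF.2
  have hUneqV : U ≠ Set.univ := fun h => hUF.1 (h ▸ univ_secure G)
  obtain ⟨x, hx⟩ : ∃ x, x ∉ U := by
    by_contra h
    push_neg at h
    exact hUneqV (Set.eq_univ_of_forall h)
  obtain ⟨y, hy, hyx⟩ : ∃ y, y ∉ U ∧ y ≠ x := by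
    by_contra h
    push_neg at h
    have hUc : U = ({x}ᶜ : Set V) := by
      ext v
      simp only [Set.mem_compl_iff, Set.mem_singleton_iff]
      constructor
      · rintro hv rfl; exact hx hv
      · intro hv; by_contra hvU; exact hv (h v hvU)
    have hxI : x ∉ I := fun hxi => hx (hUF.2 hxi)
    have : ∃ u, G.Adj x u := by
      by_contra hno; push_neg at hno; exact hxI hno
    obtain ⟨u, hu⟩ := this
    exact hUF.1 (hUc ▸ compl_singleton_secure hu)
  -- the partition
  set π : Finset (Set V) :=
    insert U ((Uᶜ.toFinset).image fun z => ({z} : Set V)) with hπ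
  have hmem_sing : ∀ z ∉ U, ({z} : Set V) ∈ π := by
    intro z hz
    exact Finset.mem_insert_of_mem
      (Finset.mem_image.2 ⟨z, Set.mem_toFinset.2 hz, rfl⟩)
  have hUneSing : ∀ z ∉ U, U ≠ ({z} : Set V) := by
    rintro z hz rfl
    exact hz rfl
  have hpart : Setoid.IsPartition (↑π : Set (Set V)) := by
    constructor
    · intro hmem
      rw [Finset.mem_coe, hπ, Finset.mem_insert] at hmem
      rcases hmem with h | h
      · exact hUne.ne_empty h.symm
      · rcases Finset.mem_image.1 h with ⟨z, _, hz⟩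
        exact (Set.singleton_ne_empty z) hz
    · intro v
      by_cases hv : v ∈ U
      · refine ⟨U, ⟨Finset.mem_coe.2 (Finset.mem_insert_self _ _), hv⟩, ?_⟩
        rintro B ⟨hB, hvB⟩
        rw [Finset.mem_coe, hπ, Finset.mem_insert] at hB
        rcases hB with rfl | hB
        · rfl
        · rcases Finset.mem_image.1 hB with ⟨z, hz, rfl⟩
          have : v = z := hvB
          subst this
          exact absurd hv (Set.mem_toFinset.1 hz)
      · refine ⟨{v}, ⟨Finset.mem_coe.2 (hmem_sing v hv), rfl⟩, ?_⟩
        rintro B ⟨hB, hvB⟩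
        rw [Finset.mem_coe, hπ, Finset.mem_insert] at hB
        rcases hB with rfl | hB
        · exact absurd hvB hv
        · rcases Finset.mem_image.1 hB with ⟨z, hz, rfl⟩
          have : v = z := hvB
          subst this
          rfl
  refine ⟨π, ⟨hpart, ?_⟩, ?_⟩
  · intro A hA
    rw [hπ, Finset.mem_insert] at hA
    rcases hA with rfl | hA
    · right
      refine ⟨hUF.1, {x}, hmem_sing x hx, Ne.symm (hUneSing x hx), hUsec x hx⟩
    · rcases Finset.mem_image.1 hA with ⟨z, hz, rfl⟩
      have hzU : z ∉ U := Set.mem_toFinset.1 hz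
      right
      refine ⟨not_secure_singleton hG z, U, Finset.mem_insert_self _ _,
        hUneSing z hzU, ?_⟩
      rw [Set.union_comm]
      exact hUsec z hzU
  · have hsub : ({U, {x}, {y}} : Finset (Set V)) ⊆ π := by
      intro A hA
      simp only [Finset.mem_insert, Finset.mem_singleton] at hA
      rcases hA with rfl | rfl | rfl
      · exact Finset.mem_insert_self _ _
      · exact hmem_sing x hx
      · exact hmem_sing y hy
    have hcard : ({U, {x}, {y}} : Finset (Set V)).card = 3 := by
      rw [Finset.card_insert_of_notMem, Finset.card_insert_of_notMem,
        Finset.card_singleton]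
      · simp only [Finset.mem_singleton]
        intro h
        exact hyx (by simpa using (Set.singleton_eq_singleton_iff.1 h.symm))
      · simp only [Finset.mem_insert, Finset.mem_singleton]
        rintro (h | h)
        · exact hUneSing x hx h
        · exact hUneSing y hy h
    calc 3 = ({U, {x}, {y}} : Finset (Set V)).card := hcard.symm
      _ ≤ π.card := Finset.card_le_card hsub

end H

section H2
variable {V : Type*} [Fintype V]

lemma top_secPartition :
    ∃ π : Finset (Set V), IsSecPartition (⊤ : SimpleGraph V) π ∧
      π.card = Fintype.card V := by
  classical
  refine ⟨Finset.univ.image fun v => ({v} : Set V), ?_, ?_⟩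
  · constructor
    · constructor
      · intro hmem
        rcases Finset.mem_image.1 (Finset.mem_coe.1 hmem) with ⟨v, _, hv⟩
        exact (Set.singleton_ne_empty v) hv
      · intro v
        refine ⟨{v}, ⟨Finset.mem_coe.2 (Finset.mem_image.2 ⟨v, Finset.mem_univ v, rfl⟩), rfl⟩, ?_⟩
        rintro B ⟨hB, hvB⟩
        rcases Finset.mem_image.1 (Finset.mem_coe.1 hB) with ⟨z, _, rfl⟩
        have : v = z := hvB
        subst this; rfl
    · intro A hA
      rcases Finset.mem_image.1 hA with ⟨v, _, rfl⟩
      left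
      refine ⟨v, rfl, ?_, ?_, ?_⟩
      · show (SimpleGraph.neighborSet ⊤ v).ncard = Nat.card V - 1
        have hset : (SimpleGraph.neighborSet (⊤ : SimpleGraph V) v) = {v}ᶜ := by
          ext w
          simp [SimpleGraph.neighborSet, ne_comm, eq_comm]
        rw [hset]
        have := Set.ncard_add_ncard_compl ({v} : Set V)
        rw [Set.ncard_singleton] at this
        omega
      · intro w hw
        exact ⟨v, rfl, by simpa [eq_comm] using hw⟩
      · intro u hu
        refine ⟨v, rfl, by simpa [eq_comm] using hu, ?_⟩
        have hs : (({v} : Set V) \ {v}) ∪ {u} = {u} := by simp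
        rw [hs]
        intro w hw
        exact ⟨u, rfl, by simpa [eq_comm] using hw⟩
  · rw [Finset.card_image_of_injective _ Set.singleton_injective]
    simp

variable {G : SimpleGraph V}

lemma sec_bddAbove (G : SimpleGraph V) :
    BddAbove {k | ∃ π : Finset (Set V), IsSecPartition G π ∧ π.card = k} := by
  refine ⟨Fintype.card V, ?_⟩
  rintro k ⟨π, hπ, rfl⟩
  exact partition_card_le hπ.1

lemma sec_ge_three (hn : 2 ≤ Fintype.card V) (hcard : Fintype.card V ≠ 2)
    (hbot : G ≠ ⊥) : 3 ≤ SEC G := by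
  classical
  have h3 : 3 ≤ Fintype.card V := by omega
  obtain ⟨a, b, hab⟩ : ∃ a b, G.Adj a b := by
    by_contra h
    push_neg at h
    exact hbot (by ext a b; simp [h a b])
  have hk : ∃ k, 3 ≤ k ∧
      k ∈ {k | ∃ π : Finset (Set V), IsSecPartition G π ∧ π.card = k} := by
    rcases eq_or_ne G ⊤ with rfl | hG
    · obtain ⟨π, hπ, hc⟩ := top_secPartition (V := V)
      exact ⟨Fintype.card V, h3, π, hπ, hc⟩
    · obtain ⟨π, hπ, hc⟩ := exists_big_partition h3 hG hab
      exact ⟨π.card, hc, π, hπ, rfl⟩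
  obtain ⟨k, h3k, hk⟩ := hk
  exact h3k.trans (le_csSup (sec_bddAbove G) hk)

lemma sec_bot (hn : 2 ≤ Fintype.card V) : SEC (⊥ : SimpleGraph V) = 2 := by
  classical
  have hV : Nonempty V := Fintype.card_pos_iff.1 (by omega)
  obtain ⟨v₀⟩ := hV
  obtain ⟨w, hw⟩ := Fintype.exists_ne_of_one_lt_card (by omega) v₀
  set π : Finset (Set V) := {({v₀} : Set V), ({v₀}ᶜ : Set V)} with hπ
  have hnesets : ({v₀} : Set V) ≠ ({v₀}ᶜ : Set V) := by
    intro h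
    have : v₀ ∈ ({v₀}ᶜ : Set V) := h ▸ rfl
    exact this rfl
  have hnotdom1 : ¬ IsDominating (⊥ : SimpleGraph V) ({v₀} : Set V) := by
    intro h
    rcases h w (by simpa using hw) with ⟨u, _, hadj⟩
    exact hadj
  have hnotdom2 : ¬ IsDominating (⊥ : SimpleGraph V) (({v₀}ᶜ : Set V)) := by
    intro h
    rcases h v₀ (by simp) with ⟨u, _, hadj⟩
    exact hadj
  have hmem : 2 ∈ {k | ∃ π : Finset (Set V), IsSecPartition (⊥ : SimpleGraph V) π ∧ π.card = k} := by
    refine ⟨π, ⟨⟨?_, ?_⟩, ?_⟩, ?_⟩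
    · intro hmem
      rw [Finset.mem_coe, hπ] at hmem
      simp only [Finset.mem_insert, Finset.mem_singleton] at hmem
      rcases hmem with h | h
      · exact (Set.singleton_ne_empty v₀) h.symm
      · have : w ∈ (∅ : Set V) := by rw [h]; simp [hw]
        exact this
    · intro v
      by_cases hv : v = v₀
      · subst hv
        refine ⟨{v}, ⟨by simp [hπ], rfl⟩, ?_⟩
        rintro B ⟨hB, hvB⟩
        rw [Finset.mem_coe, hπ] at hB
        simp only [Finset.mem_insert, Finset.mem_singleton] at hB
        rcases hB with rfl | rfl
        · rfl
        · exact absurd rfl hvB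
      · refine ⟨({v₀}ᶜ : Set V), ⟨by simp [hπ], by simpa using hv⟩, ?_⟩
        rintro B ⟨hB, hvB⟩
        rw [Finset.mem_coe, hπ] at hB
        simp only [Finset.mem_insert, Finset.mem_singleton] at hB
        rcases hB with rfl | rfl
        · exact absurd hvB hv
        · rfl
    · intro A hA
      rw [hπ] at hA
      simp only [Finset.mem_insert, Finset.mem_singleton] at hA
      have huniv : IsSecureDominating (⊥ : SimpleGraph V) (({v₀} : Set V) ∪ ({v₀}ᶜ : Set V)) := by
        rw [Set.union_compl_self]
        exact univ_secure _
      rcases hA with rfl | rfl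
      · right
        refine ⟨fun h => hnotdom1 h.1, ({v₀}ᶜ : Set V), by simp [hπ], hnesets.symm, huniv⟩
      · right
        refine ⟨fun h => hnotdom2 h.1, ({v₀} : Set V), by simp [hπ], hnesets, ?_⟩
        rw [Set.union_comm]
        exact huniv
    · rw [hπ, Finset.card_insert_of_notMem (by simpa using hnesets), Finset.card_singleton]
  have hub : ∀ k ∈ {k | ∃ π : Finset (Set V), IsSecPartition (⊥ : SimpleGraph V) π ∧ π.card = k},
      k ≤ 2 := by
    rintro k ⟨σ, ⟨hp, hval⟩, rfl⟩
    rcases Finset.eq_empty_or_nonempty σ with rfl | ⟨A, hA⟩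
    · simp
    rcases hval A hA with ⟨v, -, hdeg, -⟩ | ⟨-, B, hB, hBA, hsec⟩
    · exfalso
      have h0 : deg (⊥ : SimpleGraph V) v = 0 := by
        simp [deg, SimpleGraph.neighborSet]
      rw [h0, Nat.card_eq_fintype_card] at hdeg
      omega
    · have hAB : A ∪ B = Set.univ := by
        rw [Set.eq_univ_iff_forall]
        intro v
        by_contra hv
        rcases hsec.1 v hv with ⟨u, _, hadj⟩
        exact hadj
      have hsub : σ ⊆ {A, B} := by
        intro C hC
        have hCne : (C : Set V).Nonempty := by
          rw [Set.nonempty_iff_ne_empty]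
          rintro rfl
          exact hp.1 (by exact_mod_cast hC)
        obtain ⟨c, hc⟩ := hCne
        have hcAB : c ∈ A ∪ B := hAB ▸ Set.mem_univ c
        rcases hp.2 c with ⟨D, -, hDuniq⟩
        have hCD : C = D := hDuniq C ⟨by exact_mod_cast hC, hc⟩
        rcases hcAB with hcA | hcB
        · have : A = D := hDuniq A ⟨by exact_mod_cast hA, hcA⟩
          simp [Finset.mem_insert, hCD, this.symm]
        · have : B = D := hDuniq B ⟨by exact_mod_cast hB, hcB⟩
          simp [Finset.mem_insert, Finset.mem_singleton, hCD, this.symm]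
      calc σ.card ≤ ({A, B} : Finset (Set V)).card := Finset.card_le_card hsub
        _ ≤ 2 := by
          apply le_trans (Finset.card_insert_le _ _)
          simp
  exact le_antisymm (csSup_le ⟨2, hmem⟩ hub) (le_csSup (sec_bddAbove _) hmem)

lemma sec_top_two (hcard : Fintype.card V = 2) : SEC (⊤ : SimpleGraph V) = 2 := by
  classical
  obtain ⟨π, hπ, hc⟩ := top_secPartition (V := V)
  have hmem : 2 ∈ {k | ∃ π : Finset (Set V),
      IsSecPartition (⊤ : SimpleGraph V) π ∧ π.card = k} :=
    ⟨π, hπ, by rw [hc, hcard]⟩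
  have hub : ∀ k ∈ {k | ∃ π : Finset (Set V),
      IsSecPartition (⊤ : SimpleGraph V) π ∧ π.card = k}, k ≤ 2 := by
    rintro k ⟨σ, hσ, rfl⟩
    rw [← hcard]
    exact partition_card_le hσ.1
  exact le_antisymm (csSup_le ⟨2, hmem⟩ hub) (le_csSup (sec_bddAbove _) hmem)

lemma top_of_card_two (hcard : Fintype.card V = 2) {a b : V} (hab : G.Adj a b) :
    G = ⊤ := by
  classical
  have hne : a ≠ b := G.ne_of_adj hab
  have hall : ∀ z : V, z = a ∨ z = b := by
    intro z
    by_contra h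
    push_neg at h
    have : ({z, a, b} : Finset V).card ≤ Fintype.card V := Finset.card_le_univ _
    rw [Finset.card_insert_of_notMem (by simp [h.1, h.2]),
      Finset.card_insert_of_notMem (by simp [hne]), Finset.card_singleton, hcard] at this
    omega
  ext x y
  simp only [SimpleGraph.top_adj]
  constructor
  · exact fun h => G.ne_of_adj h
  · intro hxy
    rcases hall x with rfl | rfl <;> rcases hall y with rfl | rfl
    · exact absurd rfl hxy
    · exact hab
    · exact hab.symm
    · exact absurd rfl hxy

end H2

open SecCoal

theorem stmt4 {V : Type*} [Fintype V] (G : SimpleGraph V)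
    (hn : 2 ≤ Fintype.card V) :
    SEC G = 2 ↔ ((Fintype.card V = 2 ∧ G = ⊤) ∨ G = ⊥) := by
  constructor
  · intro h2
    by_contra hc
    push_neg at hc
    obtain ⟨hnot, hbot⟩ := hc
    rcases eq_or_ne (Fintype.card V) 2 with hcard | hcard
    · obtain ⟨a, b, hab⟩ : ∃ a b, G.Adj a b := by
        by_contra h
        push_neg at h
        exact hbot (by ext a b; simp [h a b])
      exact hnot hcard (top_of_card_two hcard hab)
    · have := sec_ge_three hn hcard hbot
      omega
  · rintro (⟨hcard, rfl⟩ | rfl)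
    · exact sec_top_two hcard
    · exact sec_bot hn
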